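/- Let r be a regular reward function, p ∈ (0,1), s := 1/(1−p), and let ω := η_s^{-1} : [0,∞) → [0,∞) be the inverse of η_s. Then: (i) ω is strictly increasing and concave, and ω(x) ≤ x for all x ≥ 0 (so ω restricted to [0,c] is a normal stationary policy for every c > 0); and (ii) writing σ̄(x) := x − ω(x), for every x ≥ 0 and i ≥ 1 one has ω(σ̄^{(i−1)}(x)) = κ̄_s^{(i−1)}(ω(x)), which equals κ_{s^{i−1}}(ω(x)) if i ≤ M_s(ω(x)) and equals 0 otherwise. -/

import Mathlib

open Set Filter MeasureTheory

/-- A regular reward function `r` with derivative `r'`: `r : [0,∞) → [0,∞)` is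
nondecreasing, Lipschitz, strictly concave, differentiable, with `r 0 = 0`; its
derivative `r'` is continuous, strictly decreasing, positive, and tends to `0` at `+∞`.
For each `s ≥ 1`, `τ s` is the unique point with `r' (τ s) = r' 0 / s`, and
`κ s : [τ s, ∞) → [0, ∞)` is defined by the relation `r' (κ s x) = s * r' x`
(for `s = 1` these reduce to `τ 1 = 0` and `κ 1 = id`); regularity means `κ s` is
convex on `[τ s, ∞)` for all `s > 1`. -/
structure RegularReward where
  r : ℝ → ℝ
  r' : ℝ → ℝ
  r_zero : r 0 = 0
  r_nonneg : ∀ x : ℝ, 0 ≤ x → 0 ≤ r x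
  r_mono : MonotoneOn r (Ici (0 : ℝ))
  r_lip : ∃ K : NNReal, LipschitzOnWith K r (Ici (0 : ℝ))
  r_strictConcave : StrictConcaveOn ℝ (Ici (0 : ℝ)) r
  r_hasDeriv : ∀ x : ℝ, 0 ≤ x → HasDerivWithinAt r (r' x) (Ici (0 : ℝ)) x
  deriv_cont : ContinuousOn r' (Ici (0 : ℝ))
  deriv_strictAnti : StrictAntiOn r' (Ici (0 : ℝ))
  deriv_pos : ∀ x : ℝ, 0 ≤ x → 0 < r' x
  deriv_tendsto_zero : Tendsto r' atTop (nhds 0)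
  τ : ℝ → ℝ
  κ : ℝ → ℝ → ℝ
  τ_nonneg : ∀ s : ℝ, 1 ≤ s → 0 ≤ τ s
  τ_spec : ∀ s : ℝ, 1 ≤ s → r' (τ s) = r' 0 / s
  κ_nonneg : ∀ s : ℝ, 1 ≤ s → ∀ x : ℝ, τ s ≤ x → 0 ≤ κ s x
  κ_spec : ∀ s : ℝ, 1 ≤ s → ∀ x : ℝ, τ s ≤ x → r' (κ s x) = s * r' x
  κ_convex : ∀ s : ℝ, 1 < s → ConvexOn ℝ (Ici (τ s)) (κ s)

namespace RegularReward

/-- The extension `κ̄_s (x) := κ_s (max x τ_s)` of `κ_s` to `[0, ∞)`. -/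
noncomputable def kbar (R : RegularReward) (s : ℝ) (x : ℝ) : ℝ :=
  R.κ s (max x (R.τ s))

/-- `M_s(x) = ⌈ln (r' 0 / r' x) / ln s⌉`. -/
noncomputable def M (R : RegularReward) (s : ℝ) (x : ℝ) : ℕ :=
  ⌈Real.log (R.r' 0 / R.r' x) / Real.log s⌉₊

/-- `M̃_s(x) = ⌊ln (r' 0 / r' x) / ln s⌋ + 1`. -/
noncomputable def Mt (R : RegularReward) (s : ℝ) (x : ℝ) : ℕ :=
  ⌊Real.log (R.r' 0 / R.r' x) / Real.log s⌋₊ + 1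

/-- `η_s(x) := ∑_{i=1}^∞ κ̄_s^{(i-1)}(x)`, a finite sum since `κ̄_s^{(i)}(x) = 0` for
`i ≥ M_s(x)`. -/
noncomputable def η (R : RegularReward) (s : ℝ) (x : ℝ) : ℝ :=
  ∑' i : ℕ, (R.kbar s)^[i] x

end RegularReward

namespace RegularReward

variable (R : RegularReward) {s : ℝ}

lemma r'_anti : AntitoneOn R.r' (Ici (0 : ℝ)) := R.deriv_strictAnti.antitoneOn

lemma r'_inj {a b : ℝ} (ha : 0 ≤ a) (hb : 0 ≤ b) (h : R.r' a = R.r' b) : a = b :=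
  R.deriv_strictAnti.injOn ha hb h

lemma kbar_nonneg (hs : 1 ≤ s) (y : ℝ) : 0 ≤ R.kbar s y :=
  R.κ_nonneg s hs _ (le_max_right _ _)

lemma iter_nonneg (hs : 1 ≤ s) {y : ℝ} (hy : 0 ≤ y) (i : ℕ) :
    0 ≤ (R.kbar s)^[i] y := by
  induction i with
  | zero => simpa
  | succ n _ => rw [Function.iterate_succ_apply']; exact R.kbar_nonneg hs _

lemma deriv_kbar (hs : 1 ≤ s) {y : ℝ} (hy : 0 ≤ y) :
    R.r' (R.kbar s y) = min (s * R.r' y) (R.r' 0) := by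
  have hτ := R.τ_nonneg s hs
  have hspec := R.τ_spec s hs
  have hs0 : 0 < s := lt_of_lt_of_le one_pos hs
  rw [kbar, R.κ_spec s hs _ (le_max_right _ _)]
  rcases le_total y (R.τ s) with h | h
  · rw [max_eq_right h]
    have h1 : R.r' (R.τ s) ≤ R.r' y := R.r'_anti hy hτ h
    have h2 : s * R.r' (R.τ s) = R.r' 0 := by rw [hspec]; field_simp
    rw [(min_eq_right (by nlinarith))]
    exact h2
  · rw [max_eq_left h]
    have h1 : R.r' y ≤ R.r' (R.τ s) := R.r'_anti hτ hy h
    have h2 : s * R.r' (R.τ s) = R.r' 0 := by rw [hspec]; field_simp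
    rw [min_eq_left (by nlinarith)]

lemma deriv_iter (hs : 1 ≤ s) {y : ℝ} (hy : 0 ≤ y) (i : ℕ) :
    R.r' ((R.kbar s)^[i] y) = min (s ^ i * R.r' y) (R.r' 0) := by
  have hs0 : 0 < s := lt_of_lt_of_le one_pos hs
  have hr0 : 0 < R.r' 0 := R.deriv_pos 0 le_rfl
  induction i with
  | zero =>
    simp only [Function.iterate_zero_apply, pow_zero, one_mul]
    exact (min_eq_left (R.r'_anti (self_mem_Ici) hy hy)).symm
  | succ n ih =>
    rw [Function.iterate_succ_apply', R.deriv_kbar hs (R.iter_nonneg hs hy n), ih,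
      mul_min_of_nonneg _ _ hs0.le, min_assoc,
      min_eq_right (le_mul_of_one_le_left hr0.le hs)]
    have h3 : s * (s ^ n * R.r' y) = s ^ (n + 1) * R.r' y := by ring
    rw [h3]

lemma iter_eq_zero (hs : 1 < s) {y : ℝ} (hy : 0 ≤ y) {i : ℕ} (hi : R.M s y ≤ i) :
    (R.kbar s)^[i] y = 0 := by
  have hs0 : 0 < s := lt_trans one_pos hs
  have hr0 : 0 < R.r' 0 := R.deriv_pos 0 le_rfl
  have hry : 0 < R.r' y := R.deriv_pos y hy
  have hlogs : 0 < Real.log s := Real.log_pos hs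
  have hL : Real.log (R.r' 0 / R.r' y) / Real.log s ≤ (i : ℝ) :=
    le_trans (Nat.le_ceil _) (by exact_mod_cast Nat.cast_le.mpr hi)
  have h1 : Real.log (R.r' 0 / R.r' y) ≤ (i : ℝ) * Real.log s :=
    (div_le_iff₀ hlogs).mp hL
  have h2 : Real.log (R.r' 0 / R.r' y) ≤ Real.log (s ^ i) := by
    rw [Real.log_pow]; exact h1
  have h3 : R.r' 0 / R.r' y ≤ s ^ i := by
    calc R.r' 0 / R.r' y = Real.exp (Real.log (R.r' 0 / R.r' y)) :=
          (Real.exp_log (div_pos hr0 hry)).symm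
      _ ≤ Real.exp (Real.log (s ^ i)) := Real.exp_le_exp.mpr h2
      _ = s ^ i := Real.exp_log (pow_pos hs0 i)
  have h4 : R.r' 0 ≤ s ^ i * R.r' y := by
    rw [div_le_iff₀ hry] at h3; linarith [h3]
  have h5 : R.r' ((R.kbar s)^[i] y) = R.r' 0 := by
    rw [R.deriv_iter hs.le hy i, min_eq_right h4]
  exact R.r'_inj (R.iter_nonneg hs.le hy i) le_rfl h5

lemma eta_eq_sum' (N : ℕ) {y : ℝ} (h0 : ∀ i : ℕ, N ≤ i → (R.kbar s)^[i] y = 0) :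
    R.η s y = ∑ i ∈ Finset.range N, (R.kbar s)^[i] y := by
  exact tsum_eq_sum (fun i hi => h0 i (le_of_not_gt (by simpa using hi)))

lemma eta_eq_sum (hs : 1 < s) {y : ℝ} (hy : 0 ≤ y) {N : ℕ} (hN : R.M s y ≤ N) :
    R.η s y = ∑ i ∈ Finset.range N, (R.kbar s)^[i] y :=
  R.eta_eq_sum' N (fun i hi => R.iter_eq_zero hs hy (hN.trans hi))

lemma eta_ge (hs : 1 < s) {y : ℝ} (hy : 0 ≤ y) : y ≤ R.η s y := by
  rw [R.eta_eq_sum hs hy (Nat.le_succ (R.M s y))]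
  calc y = (R.kbar s)^[0] y := rfl
    _ ≤ ∑ i ∈ Finset.range (R.M s y + 1), (R.kbar s)^[i] y :=
      Finset.single_le_sum (fun i _ => R.iter_nonneg hs.le hy i)
        (Finset.mem_range.mpr (Nat.succ_pos _))

lemma eta_nonneg (hs : 1 < s) {y : ℝ} (hy : 0 ≤ y) : 0 ≤ R.η s y :=
  hy.trans (R.eta_ge hs hy)

lemma eta_succ (hs : 1 < s) {y : ℝ} (hy : 0 ≤ y) :
    R.η s y = y + R.η s (R.kbar s y) := by
  have h1 : R.η s y = ∑ i ∈ Finset.range (R.M s y + 1), (R.kbar s)^[i] y :=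
    R.eta_eq_sum hs hy (Nat.le_succ _)
  have h2 : R.η s (R.kbar s y) =
      ∑ i ∈ Finset.range (R.M s y), (R.kbar s)^[i] (R.kbar s y) :=
    R.eta_eq_sum' (R.M s y) (fun i hi => by
      rw [← Function.iterate_succ_apply]
      exact R.iter_eq_zero hs hy (by omega))
  rw [h1, Finset.sum_range_succ', h2]
  simp only [Function.iterate_succ_apply, Function.iterate_zero_apply]
  ring

lemma κ_monoOn (hs : 1 ≤ s) : MonotoneOn (R.κ s) (Ici (R.τ s)) := by
  intro a ha b hb hab
  have hτ := R.τ_nonneg s hs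
  have hs0 : 0 < s := lt_of_lt_of_le one_pos hs
  by_contra h
  push_neg at h
  have h1 : R.r' (R.κ s a) < R.r' (R.κ s b) :=
    R.deriv_strictAnti (R.κ_nonneg s hs b hb) (R.κ_nonneg s hs a ha) h
  rw [R.κ_spec s hs a ha, R.κ_spec s hs b hb] at h1
  have h2 : R.r' a < R.r' b := by nlinarith
  have h3 : R.r' b ≤ R.r' a := R.r'_anti (hτ.trans ha) (hτ.trans hb) hab
  linarith

lemma kbar_mono (hs : 1 ≤ s) : Monotone (R.kbar s) := fun a b hab =>
  R.κ_monoOn hs (mem_Ici.mpr (le_max_right _ _)) (mem_Ici.mpr (le_max_right _ _)) (max_le_max hab le_rfl)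

lemma kbar_cvx (hs : 1 < s) (a b ta tb : ℝ) (hta : 0 ≤ ta) (htb : 0 ≤ tb)
    (h1 : ta + tb = 1) :
    R.kbar s (ta * a + tb * b) ≤ ta * R.kbar s a + tb * R.kbar s b := by
  set τ := R.τ s with hτdef
  have hτmem : ∀ c : ℝ, τ ≤ max c τ := fun c => le_max_right _ _
  have hmem : τ ≤ ta * max a τ + tb * max b τ := by
    calc τ = ta * τ + tb * τ := by rw [← add_mul, h1, one_mul]
      _ ≤ ta * max a τ + tb * max b τ := by
          gcongr <;> [exact le_max_right _ _; exact le_max_right _ _]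
  have hmax : max (ta * a + tb * b) τ ≤ ta * max a τ + tb * max b τ := by
    apply max_le _ hmem
    gcongr <;> [exact le_max_left _ _; exact le_max_left _ _]
  calc R.kbar s (ta * a + tb * b) = R.κ s (max (ta * a + tb * b) τ) := rfl
    _ ≤ R.κ s (ta * max a τ + tb * max b τ) :=
        R.κ_monoOn hs.le (hτmem _) hmem hmax
    _ ≤ ta * R.κ s (max a τ) + tb * R.κ s (max b τ) := by
        have := (R.κ_convex s hs).2 (hτmem a) (hτmem b) hta htb h1
        simpa using this
    _ = ta * R.kbar s a + tb * R.kbar s b := rfl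

lemma iter_cvx (hs : 1 < s) (i : ℕ) (a b ta tb : ℝ) (hta : 0 ≤ ta) (htb : 0 ≤ tb)
    (h1 : ta + tb = 1) :
    (R.kbar s)^[i] (ta * a + tb * b) ≤
      ta * (R.kbar s)^[i] a + tb * (R.kbar s)^[i] b := by
  induction i with
  | zero => simp
  | succ n ih =>
    rw [Function.iterate_succ_apply', Function.iterate_succ_apply',
      Function.iterate_succ_apply']
    calc R.kbar s ((R.kbar s)^[n] (ta * a + tb * b))
        ≤ R.kbar s (ta * (R.kbar s)^[n] a + tb * (R.kbar s)^[n] b) :=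
          R.kbar_mono hs.le ih
      _ ≤ ta * R.kbar s ((R.kbar s)^[n] a) + tb * R.kbar s ((R.kbar s)^[n] b) :=
          R.kbar_cvx hs _ _ _ _ hta htb h1

lemma eta_mono (hs : 1 < s) {a b : ℝ} (ha : 0 ≤ a) (hb : 0 ≤ b) (hab : a ≤ b) :
    R.η s a ≤ R.η s b := by
  set N := max (R.M s a) (R.M s b)
  rw [R.eta_eq_sum hs ha (le_max_left _ _ : R.M s a ≤ N),
    R.eta_eq_sum hs hb (le_max_right _ _ : R.M s b ≤ N)]
  exact Finset.sum_le_sum (fun i _ => (R.kbar_mono hs.le).iterate i hab)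

lemma eta_cvx (hs : 1 < s) {a b : ℝ} (ha : 0 ≤ a) (hb : 0 ≤ b)
    (ta tb : ℝ) (hta : 0 ≤ ta) (htb : 0 ≤ tb) (h1 : ta + tb = 1) :
    R.η s (ta * a + tb * b) ≤ ta * R.η s a + tb * R.η s b := by
  have hc : 0 ≤ ta * a + tb * b := add_nonneg (mul_nonneg hta ha) (mul_nonneg htb hb)
  set N := max (max (R.M s a) (R.M s b)) (R.M s (ta * a + tb * b)) with hN
  rw [R.eta_eq_sum hs ha (le_trans (le_max_left _ _) (le_max_left _ _)),
    R.eta_eq_sum hs hb (le_trans (le_max_right _ _) (le_max_left _ _)),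
    R.eta_eq_sum hs hc (le_max_right _ _ : _ ≤ N), Finset.mul_sum, Finset.mul_sum,
    ← Finset.sum_add_distrib]
  exact Finset.sum_le_sum (fun i _ => R.iter_cvx hs i a b ta tb hta htb h1)

end RegularReward

/-- **Properties of the maximin optimal policy `ω = η_s⁻¹`** (Theorem 4, parts 1–2).
Let `r` be a regular reward function, `p ∈ (0,1)`, `s = 1/(1-p)`, and let `ω` be the
inverse of `η_s` on `[0, ∞)`. Then: (i) `ω` is strictly increasing and concave on
`[0, ∞)` and satisfies `ω x ≤ x`, so it restricts to a normal stationary policy on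
`[0, c]` for every `c > 0`; (ii) with `σ̄ (x) := x - ω x`, for every `x ≥ 0` and
`i ≥ 1`, `ω (σ̄^{(i-1)} x) = κ̄_s^{(i-1)} (ω x)`, which equals `κ_{s^{i-1}} (ω x)` if
`i ≤ M_s (ω x)` and equals `0` otherwise. -/
theorem omega_properties (R : RegularReward) (p : ℝ) (hp : p ∈ Ioo (0 : ℝ) 1)
    (s : ℝ) (hs : s = 1 / (1 - p))
    (ω : ℝ → ℝ)
    (hω_nonneg : ∀ x : ℝ, 0 ≤ x → 0 ≤ ω x)
    (hω_rightInv : ∀ x : ℝ, 0 ≤ x → R.η s (ω x) = x)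
    (hω_leftInv : ∀ y : ℝ, 0 ≤ y → ω (R.η s y) = y) :
    (StrictMonoOn ω (Ici (0 : ℝ)) ∧ ConcaveOn ℝ (Ici (0 : ℝ)) ω ∧
        ∀ x : ℝ, 0 ≤ x → ω x ≤ x) ∧
      (∀ x : ℝ, 0 ≤ x → ∀ i : ℕ, 1 ≤ i →
        ω ((fun y => y - ω y)^[i - 1] x) = (R.kbar s)^[i - 1] (ω x) ∧
          (i ≤ R.M s (ω x) → (R.kbar s)^[i - 1] (ω x) = R.κ (s ^ (i - 1)) (ω x)) ∧
          (R.M s (ω x) < i → (R.kbar s)^[i - 1] (ω x) = 0)) := by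
  have h1p : 0 < 1 - p := by linarith [hp.2]
  have hs1 : 1 < s := by rw [hs]; exact one_lt_one_div h1p (by linarith [hp.1])
  have hs0 : 0 < s := lt_trans one_pos hs1
  -- strict monotonicity
  have hmono : StrictMonoOn ω (Ici (0 : ℝ)) := by
    intro a ha b hb hab
    rcases lt_or_ge (ω a) (ω b) with h | h
    · exact h
    · exfalso
      have := R.eta_mono hs1 (hω_nonneg b hb) (hω_nonneg a ha) h
      rw [hω_rightInv a ha, hω_rightInv b hb] at this
      exact absurd this (not_le.mpr hab)
  have hmonoOn : MonotoneOn ω (Ici (0 : ℝ)) := hmono.monotoneOn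
  -- ω x ≤ x
  have hle : ∀ x : ℝ, 0 ≤ x → ω x ≤ x := by
    intro x hx
    have := R.eta_ge hs1 (hω_nonneg x hx)
    rw [hω_rightInv x hx] at this
    exact this
  -- concavity
  have hconc : ConcaveOn ℝ (Ici (0 : ℝ)) ω := by
    refine ⟨convex_Ici 0, fun x hx y hy ta tb hta htb h1 => ?_⟩
    simp only [smul_eq_mul]
    have hu : 0 ≤ ω x := hω_nonneg x hx
    have hv : 0 ≤ ω y := hω_nonneg y hy
    have hcomb : 0 ≤ ta * ω x + tb * ω y :=
      add_nonneg (mul_nonneg hta hu) (mul_nonneg htb hv)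
    have hcxy : (0 : ℝ) ≤ ta * x + tb * y :=
      add_nonneg (mul_nonneg hta hx) (mul_nonneg htb hy)
    have h2 : R.η s (ta * ω x + tb * ω y) ≤ ta * x + tb * y := by
      have := R.eta_cvx hs1 hu hv ta tb hta htb h1
      rwa [hω_rightInv x hx, hω_rightInv y hy] at this
    have h3 := hmonoOn (R.eta_nonneg hs1 hcomb) hcxy h2
    rwa [hω_leftInv _ hcomb] at h3
  refine ⟨⟨hmono, hconc, hle⟩, ?_⟩
  intro x hx i hi
  obtain ⟨j, rfl⟩ : ∃ j, i = j + 1 := ⟨i - 1, by omega⟩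
  simp only [Nat.add_sub_cancel]
  set y := ω x with hy_def
  have hy : 0 ≤ y := hω_nonneg x hx
  -- part (ii), first clause, by induction
  have key : ∀ j : ℕ, 0 ≤ (fun y => y - ω y)^[j] x ∧
      ω ((fun y => y - ω y)^[j] x) = (R.kbar s)^[j] y := by
    intro j
    induction j with
    | zero => exact ⟨hx, rfl⟩
    | succ n ih =>
      obtain ⟨hz, hωz⟩ := ih
      set z := (fun y => y - ω y)^[n] x with hz_def
      have hstep : z - ω z = R.η s (R.kbar s (ω z)) := by
        have h4 := R.eta_succ hs1 (hω_nonneg z hz)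
        have h5 := hω_rightInv z hz
        linarith
      have hkb : 0 ≤ R.kbar s (ω z) := R.kbar_nonneg hs1.le _
      constructor
      · rw [Function.iterate_succ_apply']
        show 0 ≤ z - ω z
        rw [hstep]
        exact R.eta_nonneg hs1 hkb
      · rw [Function.iterate_succ_apply', Function.iterate_succ_apply']
        show ω (z - ω z) = R.kbar s ((R.kbar s)^[n] y)
        rw [hstep, hω_leftInv _ hkb, hωz]
  refine ⟨(key j).2, ?_, ?_⟩
  · -- j + 1 ≤ M → iterate = κ (s^j)
    intro hiM
    have hjM : j < R.M s y := hiM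
    have hr0 : 0 < R.r' 0 := R.deriv_pos 0 le_rfl
    have hry : 0 < R.r' y := R.deriv_pos y hy
    have hlogs : 0 < Real.log s := Real.log_pos hs1
    have hjL : (j : ℝ) < Real.log (R.r' 0 / R.r' y) / Real.log s :=
      Nat.lt_ceil.mp hjM
    have h1 : (j : ℝ) * Real.log s < Real.log (R.r' 0 / R.r' y) :=
      (lt_div_iff₀ hlogs).mp hjL
    have h2 : Real.log (s ^ j) < Real.log (R.r' 0 / R.r' y) := by
      rw [Real.log_pow]; exact h1
    have hpow : s ^ j < R.r' 0 / R.r' y := by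
      calc s ^ j = Real.exp (Real.log (s ^ j)) := (Real.exp_log (pow_pos hs0 j)).symm
        _ < Real.exp (Real.log (R.r' 0 / R.r' y)) := Real.exp_lt_exp.mpr h2
        _ = R.r' 0 / R.r' y := Real.exp_log (div_pos hr0 hry)
    have hsy : s ^ j * R.r' y < R.r' 0 := by
      rw [lt_div_iff₀ hry] at hpow; exact hpow
    have hs'1 : (1 : ℝ) ≤ s ^ j := one_le_pow₀ hs1.le
    have hτy : R.τ (s ^ j) ≤ y := by
      by_contra h
      push_neg at h
      have h2' : R.r' (R.τ (s ^ j)) ≤ R.r' y :=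
        R.r'_anti hy (R.τ_nonneg _ hs'1) h.le
      rw [R.τ_spec _ hs'1] at h2'
      have h3' := (div_le_iff₀ (pow_pos hs0 j)).mp h2'
      nlinarith
    have h6 : R.r' (R.κ (s ^ j) y) = R.r' ((R.kbar s)^[j] y) := by
      rw [R.κ_spec _ hs'1 y hτy, R.deriv_iter hs1.le hy j, min_eq_left hsy.le]
    exact R.r'_inj (R.iter_nonneg hs1.le hy j) (R.κ_nonneg _ hs'1 y hτy) h6.symm
  · intro h
    exact R.iter_eq_zero hs1 hy (by omega)
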